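/- Let p ≥ 5 be a prime and let O be the ring of integers of a finite extension K of ℚ_p. Then SL_2(O) is equal to the closure of its commutator subgroup (with respect to the p-adic topology on SL_2(O)). -/

import Mathlib

open Matrix IsLocalRing
open scoped commutatorElement

namespace SL2Aux

variable {O : Type} [CommRing O]

def Em (x : O) : SpecialLinearGroup (Fin 2) O :=
  ⟨!![1, x; 0, 1], by simp [Matrix.det_fin_two_of]⟩

def Em' (x : O) : SpecialLinearGroup (Fin 2) O :=
  ⟨!![1, 0; x, 1], by simp [Matrix.det_fin_two_of]⟩

def Dm (v : Oˣ) : SpecialLinearGroup (Fin 2) O :=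
  ⟨!![(v : O), 0; 0, ((v⁻¹ : Oˣ) : O)], by simp [Matrix.det_fin_two_of]⟩

lemma Em_mul (x y : O) : Em x * Em y = Em (x + y) := by
  apply Subtype.ext
  show (!![1, x; 0, 1] : Matrix (Fin 2) (Fin 2) O) * !![1, y; 0, 1] = _
  rw [Matrix.mul_fin_two]
  norm_num [Em]
  ring

lemma Em'_mul (x y : O) : Em' x * Em' y = Em' (x + y) := by
  apply Subtype.ext
  show (!![1, 0; x, 1] : Matrix (Fin 2) (Fin 2) O) * !![1, 0; y, 1] = _
  rw [Matrix.mul_fin_two]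
  norm_num [Em']

lemma Em_zero : (Em 0 : SpecialLinearGroup (Fin 2) O) = 1 := by
  apply Subtype.ext
  show (!![1, 0; 0, 1] : Matrix (Fin 2) (Fin 2) O) = 1
  rw [Matrix.one_fin_two]

lemma Em'_zero : (Em' 0 : SpecialLinearGroup (Fin 2) O) = 1 := by
  apply Subtype.ext
  show (!![1, 0; 0, 1] : Matrix (Fin 2) (Fin 2) O) = 1
  rw [Matrix.one_fin_two]

lemma Em_inv (x : O) : (Em x)⁻¹ = Em (-x) := by
  apply inv_eq_of_mul_eq_one_right
  rw [Em_mul]; simpa using Em_zero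

lemma Em'_inv (x : O) : (Em' x)⁻¹ = Em' (-x) := by
  apply inv_eq_of_mul_eq_one_right
  rw [Em'_mul]; simpa using Em'_zero

lemma Dm_Em (v : Oˣ) (x : O) : Dm v * Em x = Em ((v : O)^2 * x) * Dm v := by
  apply Subtype.ext
  show (!![(v : O), 0; 0, ((v⁻¹ : Oˣ) : O)]) * !![1, x; 0, 1]
      = !![1, (v:O)^2 * x; 0, 1] * !![(v : O), 0; 0, ((v⁻¹ : Oˣ) : O)]
  have hv := v.mul_inv
  rw [Matrix.mul_fin_two, Matrix.mul_fin_two]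
  ext i j
  fin_cases i <;> fin_cases j <;> simp <;> linear_combination (-((v:O) * x)) * hv

lemma Dm_Em' (v : Oˣ) (x : O) :
    Dm v * Em' x = Em' (((v⁻¹ : Oˣ) : O)^2 * x) * Dm v := by
  apply Subtype.ext
  show (!![(v : O), 0; 0, ((v⁻¹ : Oˣ) : O)]) * !![1, 0; x, 1]
      = !![1, 0; ((v⁻¹ : Oˣ) : O)^2 * x, 1] * !![(v : O), 0; 0, ((v⁻¹ : Oˣ) : O)]
  have hv := v.inv_mul
  rw [Matrix.mul_fin_two, Matrix.mul_fin_two]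
  ext i j
  fin_cases i <;> fin_cases j <;> simp <;>
    first
      | linear_combination (-(((v⁻¹ : Oˣ) : O) * x)) * hv
      | linear_combination (((v⁻¹ : Oˣ) : O) * x) * hv

lemma comm_Em (v : Oˣ) (x : O) :
    ⁅Dm v, Em x⁆ = Em (((v : O)^2 - 1) * x) := by
  rw [commutatorElement_def, Em_inv, Dm_Em, mul_assoc (Em ((v:O)^2 * x)),
    mul_inv_cancel, mul_one, Em_mul]
  congr 1; ring

lemma comm_Em' (v : Oˣ) (x : O) :
    ⁅Dm v, Em' x⁆ = Em' ((((v⁻¹ : Oˣ) : O)^2 - 1) * x) := by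
  rw [commutatorElement_def, Em'_inv, Dm_Em', mul_assoc (Em' _),
    mul_inv_cancel, mul_one, Em'_mul]
  congr 1; ring

lemma factor (A : SpecialLinearGroup (Fin 2) O) (t : O)
    (h : (A : Matrix (Fin 2) (Fin 2) O) 0 0 + t * (A : Matrix (Fin 2) (Fin 2) O) 1 0 = 1) :
    Em' (-((A : Matrix (Fin 2) (Fin 2) O) 1 0)) * (Em t * A)
      = Em ((A : Matrix (Fin 2) (Fin 2) O) 0 1 + t * (A : Matrix (Fin 2) (Fin 2) O) 1 1) := by
  have hd : det (A : Matrix (Fin 2) (Fin 2) O) = 1 := A.property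
  rw [Matrix.det_fin_two] at hd
  set a := (A : Matrix (Fin 2) (Fin 2) O) 0 0 with ha
  set b := (A : Matrix (Fin 2) (Fin 2) O) 0 1 with hb
  set c := (A : Matrix (Fin 2) (Fin 2) O) 1 0 with hc
  set d := (A : Matrix (Fin 2) (Fin 2) O) 1 1 with hd2
  apply Subtype.ext
  show (!![1, 0; -c, 1]) * ((!![1, t; 0, 1]) * (A : Matrix (Fin 2) (Fin 2) O))
      = !![1, b + t * d; 0, 1]
  rw [Matrix.eta_fin_two (A : Matrix (Fin 2) (Fin 2) O), ← ha, ← hb, ← hc, ← hd2,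
    Matrix.mul_fin_two, Matrix.mul_fin_two]
  ext i j
  fin_cases i <;> fin_cases j <;> simp <;>
    first
      | linear_combination h
      | linear_combination (-c) * h
      | linear_combination hd - d * h
      | linear_combination -hd + d * h
      | linear_combination c * h
      | linear_combination -h
      | linear_combination d * h - hd

lemma mem_of_unit_c (H : Subgroup (SpecialLinearGroup (Fin 2) O))
    (hE : ∀ x : O, Em x ∈ H) (hE' : ∀ x : O, Em' x ∈ H)
    (A : SpecialLinearGroup (Fin 2) O)
    (hc : IsUnit ((A : Matrix (Fin 2) (Fin 2) O) 1 0)) : A ∈ H := by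
  obtain ⟨v, hv⟩ := hc
  set t := (1 - (A : Matrix (Fin 2) (Fin 2) O) 0 0) * ((v⁻¹ : Oˣ) : O) with ht
  have h : (A : Matrix (Fin 2) (Fin 2) O) 0 0 + t * (A : Matrix (Fin 2) (Fin 2) O) 1 0 = 1 := by
    rw [ht, ← hv]
    linear_combination (1 - (A : Matrix (Fin 2) (Fin 2) O) 0 0) * v.inv_mul
  have hf := factor A t h
  have hA : A = (Em t)⁻¹ * ((Em' (-((A : Matrix (Fin 2) (Fin 2) O) 1 0)))⁻¹
      * Em ((A : Matrix (Fin 2) (Fin 2) O) 0 1 + t * (A : Matrix (Fin 2) (Fin 2) O) 1 1)) := by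
    rw [← hf]; group
  rw [hA]
  exact H.mul_mem (H.inv_mem (hE t)) (H.mul_mem (H.inv_mem (hE' _)) (hE _))

lemma mem_all [IsLocalRing O] (H : Subgroup (SpecialLinearGroup (Fin 2) O))
    (hE : ∀ x : O, Em x ∈ H) (hE' : ∀ x : O, Em' x ∈ H)
    (A : SpecialLinearGroup (Fin 2) O) : A ∈ H := by
  by_cases hc : IsUnit ((A : Matrix (Fin 2) (Fin 2) O) 1 0)
  · exact mem_of_unit_c H hE hE' A hc
  · have hd : det (A : Matrix (Fin 2) (Fin 2) O) = 1 := A.property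
    rw [Matrix.det_fin_two] at hd
    have hcm : (A : Matrix (Fin 2) (Fin 2) O) 1 0 ∈ maximalIdeal O :=
      (mem_maximalIdeal _).2 hc
    have ha : IsUnit ((A : Matrix (Fin 2) (Fin 2) O) 0 0) := by
      by_contra ha
      have ham : (A : Matrix (Fin 2) (Fin 2) O) 0 0 ∈ maximalIdeal O :=
        (mem_maximalIdeal _).2 ha
      have h1 : (1 : O) ∈ maximalIdeal O := by
        rw [← hd]
        exact Ideal.sub_mem _ (Ideal.mul_mem_right _ _ ham) (Ideal.mul_mem_left _ _ hcm)
      exact (Ideal.ne_top_iff_one _).1 (maximalIdeal.isMaximal O).ne_top h1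
    have hsum : IsUnit ((A : Matrix (Fin 2) (Fin 2) O) 0 0
        + (A : Matrix (Fin 2) (Fin 2) O) 1 0) := by
      by_contra hs
      have ham : (A : Matrix (Fin 2) (Fin 2) O) 0 0 ∈ maximalIdeal O := by
        have h' : (A : Matrix (Fin 2) (Fin 2) O) 0 0
            = ((A : Matrix (Fin 2) (Fin 2) O) 0 0 + (A : Matrix (Fin 2) (Fin 2) O) 1 0)
              - (A : Matrix (Fin 2) (Fin 2) O) 1 0 := by ring
        rw [h']
        exact Ideal.sub_mem _ ((mem_maximalIdeal _).2 hs) hcm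
      exact mem_nonunits_iff.1 ((mem_maximalIdeal _).1 ham) ha
    have hB : ((Em' 1 * A : SpecialLinearGroup (Fin 2) O) : Matrix (Fin 2) (Fin 2) O) 1 0
        = (A : Matrix (Fin 2) (Fin 2) O) 0 0 + (A : Matrix (Fin 2) (Fin 2) O) 1 0 := by
      show ((!![1, 0; 1, 1] : Matrix (Fin 2) (Fin 2) O) * (A : Matrix (Fin 2) (Fin 2) O)) 1 0 = _
      rw [Matrix.mul_apply, Fin.sum_univ_two]
      simp
    have hBmem : (Em' 1 * A) ∈ H := by
      apply mem_of_unit_c H hE hE'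
      rw [hB]; exact hsum
    have hA : A = (Em' 1)⁻¹ * (Em' 1 * A) := by group
    rw [hA]
    exact H.mul_mem (H.inv_mem (hE' 1)) hBmem

end SL2Aux

/-- `SL₂` of a topological ring carries the subspace topology from the matrix ring. -/
noncomputable instance sltop (n R : Type*) [DecidableEq n] [Fintype n] [CommRing R]
    [TopologicalSpace R] : TopologicalSpace (SpecialLinearGroup n R) :=
  TopologicalSpace.induced (fun A => (A : Matrix n n R)) inferInstance

/-- Let `p ≥ 5` be a prime and `O` the ring of integers of a finite
extension of `ℚ_p` — modelled abstractly as a compact Hausdorff topological ring which is a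
discrete valuation ring of characteristic zero, whose topology is the adic topology of its
maximal ideal, and whose residue field is finite of characteristic `p`. Then `SL₂(O)` is
the closure of its own commutator subgroup (for the `p`-adic topology). -/
theorem stmt10 (p : ℕ) (hp : p.Prime) (hp5 : 5 ≤ p)
    (O : Type) [CommRing O] [IsDomain O] [TopologicalSpace O] [IsTopologicalRing O]
    [IsLocalRing O] [IsDiscreteValuationRing O] [CharZero O]
    [CompactSpace O] [T2Space O]
    (hadic : IsAdic (maximalIdeal O))
    [Finite (ResidueField O)] (hchar : CharP (ResidueField O) p) :
    closure ((commutator (SpecialLinearGroup (Fin 2) O) : Subgroup _) :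
      Set (SpecialLinearGroup (Fin 2) O)) = Set.univ := by
  haveI := hchar
  -- small natural numbers below `p` are units in `O`
  have hk : ∀ n : ℕ, 0 < n → n < p → IsUnit ((n : ℕ) : O) := by
    intro n hn hnp
    apply (IsLocalRing.residue_ne_zero_iff_isUnit _).1
    rw [map_natCast]
    intro h0
    rw [CharP.cast_eq_zero_iff (ResidueField O) p] at h0
    exact absurd (Nat.le_of_dvd hn h0) (by omega)
  have h2 : IsUnit (2 : O) := by exact_mod_cast hk 2 (by norm_num) (by omega)
  have h3 : IsUnit (3 : O) := by exact_mod_cast hk 3 (by norm_num) (by omega)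
  set u : Oˣ := h2.unit with hu
  set c3 : Oˣ := h3.unit with hc3
  have hu2 : (u : O) = 2 := h2.unit_spec
  have h31 : (3 : O) * ((c3⁻¹ : Oˣ) : O) = 1 := by
    rw [← h3.unit_spec, ← hc3]; exact c3.mul_inv
  have hE : ∀ x : O, SL2Aux.Em x ∈ commutator (SpecialLinearGroup (Fin 2) O) := by
    intro x
    have key : ⁅SL2Aux.Dm u, SL2Aux.Em (((c3⁻¹ : Oˣ) : O) * x)⁆ = SL2Aux.Em x := by
      rw [SL2Aux.comm_Em]
      congr 1
      rw [hu2]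
      linear_combination x * h31
    rw [commutator_def, ← key]
    exact Subgroup.commutator_mem_commutator (Subgroup.mem_top _) (Subgroup.mem_top _)
  have hE' : ∀ x : O, SL2Aux.Em' x ∈ commutator (SpecialLinearGroup (Fin 2) O) := by
    intro x
    have key : ⁅SL2Aux.Dm u⁻¹, SL2Aux.Em' (((c3⁻¹ : Oˣ) : O) * x)⁆ = SL2Aux.Em' x := by
      rw [SL2Aux.comm_Em']
      congr 1
      rw [inv_inv, hu2]
      linear_combination x * h31
    rw [commutator_def, ← key]
    exact Subgroup.commutator_mem_commutator (Subgroup.mem_top _) (Subgroup.mem_top _)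
  have hall : ∀ A : SpecialLinearGroup (Fin 2) O,
      A ∈ commutator (SpecialLinearGroup (Fin 2) O) :=
    SL2Aux.mem_all _ hE hE'
  have huniv : ((commutator (SpecialLinearGroup (Fin 2) O) : Subgroup _) :
      Set (SpecialLinearGroup (Fin 2) O)) = Set.univ :=
    Set.eq_univ_of_forall hall
  rw [huniv, closure_univ]
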